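/- arXiv:2110.04566 — 4 statements merged into one kernel-verified Lean document; each statement's English description precedes it below -/
import Mathlib

section
/- For each j ∈ {1,2,3} and all F, G ∈ L²(ℝ³; ℂ), the function (t, ξ) ↦ t · ξ_j⁴ |ξ|⁴ e^{−t|ξ|⁴} F(ξ) · conj(G(ξ)) is integrable on (0,∞) × ℝ³, and ∫₀^∞ t ( ∫_{ℝ³} ξ_j⁴ |ξ|⁴ e^{−t|ξ|⁴} F(ξ) conj(G(ξ)) dξ ) dt = ∫_{ℝ³} (ξ_j⁴/|ξ|⁴) F(ξ) conj(G(ξ)) dξ. (Taking F = 𝓕f and G = 𝓕g, this is the representation ⟨𝓡_j⁴ f, g⟩_{L²} = −∫₀^∞ ⟨∂_{x_j}⁴ (d/dt) P_t f, g⟩ t dt of the fourth power of the Riesz transform 𝓡_j in terms of the semigroup P_t = e^{−tΔ²} associated to the parabolic biharmonic equation ∂_t w + Δ² w = 0.) -/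
open MeasureTheory FourierTransform

noncomputable section

private lemma gamma_two_real : Real.Gamma 2 = 1 := by
  rw [show (2 : ℝ) = (1 : ℕ) + 1 by norm_num, Real.Gamma_nat_eq_factorial]
  norm_num

private lemma aux_integrableOn {a : ℝ} (ha : 0 < a) :
    IntegrableOn (fun t : ℝ => t * Real.exp (-(t * a))) (Set.Ioi 0) := by
  have h := integrableOn_rpow_mul_exp_neg_mul_rpow (s := 1) (p := 1) (b := a)
    (by norm_num) one_pos ha
  simp only [Real.rpow_one] at h
  simpa [neg_mul, mul_comm] using h

private lemma aux_integral {a : ℝ} (ha : 0 < a) :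
    ∫ t in Set.Ioi (0 : ℝ), t * Real.exp (-(t * a)) = 1 / a ^ 2 := by
  have h := Real.integral_rpow_mul_exp_neg_mul_Ioi (a := 2) (r := a) two_pos ha
  have h2 : ((1 : ℝ) / a) ^ (2 : ℝ) = 1 / a ^ 2 := by
    rw [Real.rpow_two]; ring
  simp only [show (2 : ℝ) - 1 = 1 by norm_num, Real.rpow_one, h2, gamma_two_real,
    mul_one] at h
  simpa [mul_comm] using h

private lemma coord_pow_le (j : Fin 3) (ξ : EuclideanSpace ℝ (Fin 3)) :
    (ξ j) ^ 4 ≤ ‖ξ‖ ^ 4 := by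
  have h2 : (ξ j) ^ 2 ≤ ‖ξ‖ ^ 2 := by
    rw [EuclideanSpace.norm_eq, Real.sq_sqrt (by positivity)]
    calc (ξ j) ^ 2 = ‖ξ j‖ ^ 2 := by rw [Real.norm_eq_abs, sq_abs]
      _ ≤ ∑ i, ‖ξ i‖ ^ 2 :=
        Finset.single_le_sum (f := fun i => ‖ξ i‖ ^ 2) (fun i _ => by positivity) (Finset.mem_univ j)
  calc (ξ j) ^ 4 = ((ξ j) ^ 2) ^ 2 := by ring
    _ ≤ (‖ξ‖ ^ 2) ^ 2 := by
      apply pow_le_pow_left₀ (by positivity) h2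
    _ = ‖ξ‖ ^ 4 := by ring

/-- Representation of the fourth power of the Riesz transform via the semigroup
`P_t = e^{−tΔ²}` of the parabolic biharmonic equation: for `F, G ∈ L²(ℝ³)`,
the function `(t,ξ) ↦ t ξ_j⁴ |ξ|⁴ e^{−t|ξ|⁴} F(ξ) conj(G(ξ))` is integrable on
`(0,∞) × ℝ³` and its iterated integral equals `∫ (ξ_j⁴/|ξ|⁴) F conj(G)`. -/
theorem riesz_fourth_power_biharmonic_representation
    (j : Fin 3) (F G : EuclideanSpace ℝ (Fin 3) → ℂ)
    (hF : MemLp F 2 volume) (hG : MemLp G 2 volume) :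
    Integrable
      (fun p : ℝ × EuclideanSpace ℝ (Fin 3) =>
        ((p.1 * (p.2 j) ^ 4 * ‖p.2‖ ^ 4 * Real.exp (-(p.1 * ‖p.2‖ ^ 4)) : ℝ) : ℂ) *
          (F p.2 * (starRingEnd ℂ) (G p.2)))
      ((volume.restrict (Set.Ioi (0 : ℝ))).prod volume) ∧
    ∫ t in Set.Ioi (0 : ℝ),
        (t : ℂ) * ∫ ξ, (((ξ j) ^ 4 * ‖ξ‖ ^ 4 * Real.exp (-(t * ‖ξ‖ ^ 4)) : ℝ) : ℂ) *
          (F ξ * (starRingEnd ℂ) (G ξ)) =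
      ∫ ξ, (((ξ j) ^ 4 / ‖ξ‖ ^ 4 : ℝ) : ℂ) * (F ξ * (starRingEnd ℂ) (G ξ)) := by
  set μ := volume.restrict (Set.Ioi (0 : ℝ)) with hμ
  set H : EuclideanSpace ℝ (Fin 3) → ℂ := fun ξ => F ξ * (starRingEnd ℂ) (G ξ) with hHdef
  set f : ℝ × EuclideanSpace ℝ (Fin 3) → ℂ := fun p =>
    ((p.1 * (p.2 j) ^ 4 * ‖p.2‖ ^ 4 * Real.exp (-(p.1 * ‖p.2‖ ^ 4)) : ℝ) : ℂ) * H p.2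
    with hfdef
  -- almost every ξ is nonzero
  have h0 : ∀ᵐ ξ : EuclideanSpace ℝ (Fin 3) ∂volume, ξ ≠ 0 := by
    simpa using (Set.countable_singleton (0 : EuclideanSpace ℝ (Fin 3))).ae_notMem volume
  -- H is integrable
  have hGc : MemLp (fun ξ => (starRingEnd ℂ) (G ξ)) 2 volume := by
    refine ⟨RCLike.continuous_conj.comp_aestronglyMeasurable hG.1, ?_⟩
    have := eLpNorm_conj G 2 volume
    calc eLpNorm (fun ξ => (starRingEnd ℂ) (G ξ)) 2 volume
        = eLpNorm G 2 volume := eLpNorm_conj G 2 volume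
      _ < ⊤ := hG.2
  have hH : Integrable H volume := by
    rw [← memLp_one_iff_integrable]
    have h := hGc.smul (r := 1) hF (hpqr := ⟨by simp [one_div, ENNReal.inv_two_add_inv_two]⟩)
    simpa [hHdef, smul_eq_mul, Pi.mul_def] using h
  -- continuity of the real kernel
  have hcoord : Continuous fun ξ : EuclideanSpace ℝ (Fin 3) => ξ j := (EuclideanSpace.proj (𝕜 := ℝ) j).continuous
  have hkcont : Continuous (fun p : ℝ × EuclideanSpace ℝ (Fin 3) =>
      p.1 * (p.2 j) ^ 4 * ‖p.2‖ ^ 4 * Real.exp (-(p.1 * ‖p.2‖ ^ 4))) := by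
    have h1 : Continuous fun p : ℝ × EuclideanSpace ℝ (Fin 3) => p.2 j := hcoord.comp continuous_snd
    have h2 : Continuous fun p : ℝ × EuclideanSpace ℝ (Fin 3) => ‖p.2‖ := continuous_norm.comp continuous_snd
    exact ((continuous_fst.mul (h1.pow 4)).mul (h2.pow 4)).mul
      ((continuous_fst.mul (h2.pow 4)).neg.rexp
      )
  have hfmeas : AEStronglyMeasurable f (μ.prod volume) :=
    ((Complex.continuous_ofReal.comp hkcont).aestronglyMeasurable).mul hH.1.comp_snd
  -- integrability on the product
  have hInt : Integrable f (μ.prod volume) := by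
    rw [integrable_prod_iff' hfmeas]
    constructor
    · filter_upwards [h0] with ξ hξ
      have ha : 0 < ‖ξ‖ ^ 4 := pow_pos (norm_pos_iff.2 hξ) 4
      refine ((((aux_integrableOn ha).const_mul ((ξ j) ^ 4 * ‖ξ‖ ^ 4)).ofReal.mul_const
        (H ξ)).congr ?_)
      refine Filter.Eventually.of_forall fun t => ?_
      have hre : (ξ j) ^ 4 * ‖ξ‖ ^ 4 * (t * Real.exp (-(t * ‖ξ‖ ^ 4)))
          = t * (ξ j) ^ 4 * ‖ξ‖ ^ 4 * Real.exp (-(t * ‖ξ‖ ^ 4)) := by ring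
      simp only [hfdef, hre]
      norm_cast
    · have hmeas2 : AEStronglyMeasurable (fun ξ => ∫ t, ‖f (t, ξ)‖ ∂μ) volume := by
        have := hfmeas.prod_swap.norm.integral_prod_right'
        simpa using this
      refine (hH.norm.mono' hmeas2 ?_)
      filter_upwards [h0] with ξ hξ
      have ha : 0 < ‖ξ‖ ^ 4 := pow_pos (norm_pos_iff.2 hξ) 4
      rw [Real.norm_of_nonneg (integral_nonneg fun t => norm_nonneg _)]
      have hptwise : ∀ᵐ t ∂μ,
          ‖f (t, ξ)‖ = (((ξ j) ^ 4 * ‖ξ‖ ^ 4) * (t * Real.exp (-(t * ‖ξ‖ ^ 4)))) * ‖H ξ‖ := by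
        rw [hμ, ae_restrict_iff' measurableSet_Ioi]
        refine Filter.Eventually.of_forall fun t ht => ?_
        have ht' : (0 : ℝ) < t := ht
        simp only [hfdef, norm_mul, Complex.norm_real, Real.norm_eq_abs]
        rw [abs_of_nonneg (by positivity : (0:ℝ) ≤ (ξ j) ^ 4),
          abs_of_nonneg (by positivity : (0:ℝ) ≤ ‖ξ‖ ^ 4),
          abs_of_nonneg (Real.exp_pos _).le,
          abs_of_nonneg ht'.le]
        ring
      rw [integral_congr_ae hptwise, integral_mul_const, integral_const_mul,
        aux_integral ha]
      have hle : (ξ j) ^ 4 * ‖ξ‖ ^ 4 * (1 / (‖ξ‖ ^ 4) ^ 2) ≤ 1 := by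
        rw [mul_one_div]
        rw [div_le_one (by positivity)]
        calc (ξ j) ^ 4 * ‖ξ‖ ^ 4 ≤ ‖ξ‖ ^ 4 * ‖ξ‖ ^ 4 :=
          mul_le_mul_of_nonneg_right (coord_pow_le j ξ) ha.le
          _ = (‖ξ‖ ^ 4) ^ 2 := by ring
      calc (ξ j) ^ 4 * ‖ξ‖ ^ 4 * (1 / (‖ξ‖ ^ 4) ^ 2) * ‖H ξ‖ ≤ 1 * ‖H ξ‖ :=
            mul_le_mul_of_nonneg_right hle (norm_nonneg _)
        _ = ‖H ξ‖ := one_mul _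
  refine ⟨hInt, ?_⟩
  -- rewrite the left-hand side as an iterated integral of f
  have hLHS : ∀ t : ℝ,
      (t : ℂ) * ∫ ξ, (((ξ j) ^ 4 * ‖ξ‖ ^ 4 * Real.exp (-(t * ‖ξ‖ ^ 4)) : ℝ) : ℂ) * H ξ
        = ∫ ξ, f (t, ξ) := by
    intro t
    rw [← integral_const_mul]
    refine integral_congr_ae (Filter.Eventually.of_forall fun ξ => ?_)
    simp only [hfdef]
    rw [← mul_assoc, show (t : ℂ) * (((ξ j) ^ 4 * ‖ξ‖ ^ 4 * Real.exp (-(t * ‖ξ‖ ^ 4)) : ℝ) : ℂ)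
      = ((t * (ξ j) ^ 4 * ‖ξ‖ ^ 4 * Real.exp (-(t * ‖ξ‖ ^ 4)) : ℝ) : ℂ) from by
        push_cast; ring]
  calc ∫ t in Set.Ioi (0 : ℝ),
        (t : ℂ) * ∫ ξ, (((ξ j) ^ 4 * ‖ξ‖ ^ 4 * Real.exp (-(t * ‖ξ‖ ^ 4)) : ℝ) : ℂ) * H ξ
      = ∫ t, ∫ ξ, f (t, ξ) ∂volume ∂μ := by
        refine integral_congr_ae (Filter.Eventually.of_forall fun t => hLHS t)
    _ = ∫ ξ, ∫ t, f (t, ξ) ∂μ ∂volume := integral_integral_swap hInt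
    _ = ∫ ξ, (((ξ j) ^ 4 / ‖ξ‖ ^ 4 : ℝ) : ℂ) * H ξ := by
        refine integral_congr_ae ?_
        filter_upwards [h0] with ξ hξ
        have ha : 0 < ‖ξ‖ ^ 4 := pow_pos (norm_pos_iff.2 hξ) 4
        have hpt : ∀ t : ℝ, f (t, ξ)
            = ((((ξ j) ^ 4 * ‖ξ‖ ^ 4) * (t * Real.exp (-(t * ‖ξ‖ ^ 4))) : ℝ) : ℂ) * H ξ := by
          intro t
          simp only [hfdef]
          rw [show (ξ j) ^ 4 * ‖ξ‖ ^ 4 * (t * Real.exp (-(t * ‖ξ‖ ^ 4)))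
            = t * (ξ j) ^ 4 * ‖ξ‖ ^ 4 * Real.exp (-(t * ‖ξ‖ ^ 4)) from by ring]
        calc ∫ t, f (t, ξ) ∂μ
            = ∫ t, ((((ξ j) ^ 4 * ‖ξ‖ ^ 4) * (t * Real.exp (-(t * ‖ξ‖ ^ 4))) : ℝ) : ℂ) * H ξ ∂μ :=
              integral_congr_ae (Filter.Eventually.of_forall fun t => hpt t)
          _ = ((∫ t, ((ξ j) ^ 4 * ‖ξ‖ ^ 4) * (t * Real.exp (-(t * ‖ξ‖ ^ 4))) ∂μ : ℝ) : ℂ) * H ξ := by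
              rw [integral_mul_const]
              congr 1
              exact integral_ofReal (𝕜 := ℂ)
          _ = (((ξ j) ^ 4 / ‖ξ‖ ^ 4 : ℝ) : ℂ) * H ξ := by
              rw [integral_const_mul, aux_integral ha]
              congr 1
              rw [Complex.ofReal_inj]
              field_simp
end
end

section
/- There exist an integer N ≥ 1, real polynomials q̃₁,…,q̃_N and q₁,…,q_N, all with nonnegative coefficients and with each q_k nonzero of degree at least 1, and a constant C > 0, such that for every c > 0 and every x = (x₁,x₂,x₃) ∈ ℝ³ with (x₁,x₂) ≠ (0,0), the fourth derivative at s = x₃ of the function s ↦ sin(c·√(x₁² + x₂² + s²))/√(x₁² + x₂² + s²) satisfies |∂⁴_s [sin(c√(x₁²+x₂²+s²))/√(x₁²+x₂²+s²)]|_{s=x₃}| ≤ C · Σ_{k=1}^N q̃_k(c)/q_k(|x|), where |x| = √(x₁² + x₂² + x₃²). -/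
noncomputable section

open Real

private lemma sqrt_hasDeriv (a c s : ℝ) (ha : 0 < a) :
    HasDerivAt (fun t : ℝ => Real.sqrt (a + t ^ 2)) (s / Real.sqrt (a + s ^ 2)) s := by
  have hpos : (0:ℝ) < a + s ^ 2 := by positivity
  have hq : HasDerivAt (fun t : ℝ => a + t ^ 2) (2 * s) s := by
    simpa using (hasDerivAt_pow 2 s).const_add a
  have h := hq.sqrt (ne_of_gt hpos)
  have hR0 : Real.sqrt (a + s ^ 2) ≠ 0 := by positivity
  convert h using 1
  field_simp


set_option maxHeartbeats 2000000 in
private lemma dlev1 (a c : ℝ) (ha : 0 < a) (s : ℝ) :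
    HasDerivAt (fun t : ℝ => Real.sin (c * Real.sqrt (a + t ^ 2)) / Real.sqrt (a + t ^ 2))
      (((-1 : ℝ) * c ^ 0) * (s ^ 1 * Real.sin (c * Real.sqrt (a + s ^ 2)) / Real.sqrt (a + s ^ 2) ^ 3) + ((1 : ℝ) * c ^ 1) * (s ^ 1 * Real.cos (c * Real.sqrt (a + s ^ 2)) / Real.sqrt (a + s ^ 2) ^ 2)) s := by
  have hpos : (0:ℝ) < a + s ^ 2 := by positivity
  have hR0 : Real.sqrt (a + s ^ 2) ≠ 0 := by positivity
  have hr := sqrt_hasDeriv a c s ha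
  have H := ((hr.const_mul c).sin).div hr hR0
  refine H.congr_deriv ?_
  set RR := Real.sqrt (a + s ^ 2) with hRRdef
  field_simp
  ring


set_option maxHeartbeats 2000000 in
private lemma dlev2 (a c : ℝ) (ha : 0 < a) (s : ℝ) :
    HasDerivAt (fun t : ℝ => ((-1 : ℝ) * c ^ 0) * (t ^ 1 * Real.sin (c * Real.sqrt (a + t ^ 2)) / Real.sqrt (a + t ^ 2) ^ 3) + ((1 : ℝ) * c ^ 1) * (t ^ 1 * Real.cos (c * Real.sqrt (a + t ^ 2)) / Real.sqrt (a + t ^ 2) ^ 2))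
      (((-1 : ℝ) * c ^ 0) * (s ^ 0 * Real.sin (c * Real.sqrt (a + s ^ 2)) / Real.sqrt (a + s ^ 2) ^ 3) + ((3 : ℝ) * c ^ 0) * (s ^ 2 * Real.sin (c * Real.sqrt (a + s ^ 2)) / Real.sqrt (a + s ^ 2) ^ 5) + ((1 : ℝ) * c ^ 1) * (s ^ 0 * Real.cos (c * Real.sqrt (a + s ^ 2)) / Real.sqrt (a + s ^ 2) ^ 2) + ((-3 : ℝ) * c ^ 1) * (s ^ 2 * Real.cos (c * Real.sqrt (a + s ^ 2)) / Real.sqrt (a + s ^ 2) ^ 4) + ((-1 : ℝ) * c ^ 2) * (s ^ 2 * Real.sin (c * Real.sqrt (a + s ^ 2)) / Real.sqrt (a + s ^ 2) ^ 3)) s := by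
  have hpos : (0:ℝ) < a + s ^ 2 := by positivity
  have hR0 : Real.sqrt (a + s ^ 2) ≠ 0 := by positivity
  have hr := sqrt_hasDeriv a c s ha
  have h0 := (((hasDerivAt_pow 1 s).mul ((hr.const_mul c).sin)).div (hr.pow 3) (pow_ne_zero _ hR0)).const_mul ((-1 : ℝ) * c ^ 0)
  have h1 := (((hasDerivAt_pow 1 s).mul ((hr.const_mul c).cos)).div (hr.pow 2) (pow_ne_zero _ hR0)).const_mul ((1 : ℝ) * c ^ 1)
  have H := (h0.add h1)
  refine H.congr_deriv ?_
  simp only [Pi.pow_apply, Pi.mul_apply]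
  set RR := Real.sqrt (a + s ^ 2) with hRRdef
  field_simp
  ring


set_option maxHeartbeats 2000000 in
private lemma dlev3 (a c : ℝ) (ha : 0 < a) (s : ℝ) :
    HasDerivAt (fun t : ℝ => ((-1 : ℝ) * c ^ 0) * (t ^ 0 * Real.sin (c * Real.sqrt (a + t ^ 2)) / Real.sqrt (a + t ^ 2) ^ 3) + ((3 : ℝ) * c ^ 0) * (t ^ 2 * Real.sin (c * Real.sqrt (a + t ^ 2)) / Real.sqrt (a + t ^ 2) ^ 5) + ((1 : ℝ) * c ^ 1) * (t ^ 0 * Real.cos (c * Real.sqrt (a + t ^ 2)) / Real.sqrt (a + t ^ 2) ^ 2) + ((-3 : ℝ) * c ^ 1) * (t ^ 2 * Real.cos (c * Real.sqrt (a + t ^ 2)) / Real.sqrt (a + t ^ 2) ^ 4) + ((-1 : ℝ) * c ^ 2) * (t ^ 2 * Real.sin (c * Real.sqrt (a + t ^ 2)) / Real.sqrt (a + t ^ 2) ^ 3))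
      (((9 : ℝ) * c ^ 0) * (s ^ 1 * Real.sin (c * Real.sqrt (a + s ^ 2)) / Real.sqrt (a + s ^ 2) ^ 5) + ((-15 : ℝ) * c ^ 0) * (s ^ 3 * Real.sin (c * Real.sqrt (a + s ^ 2)) / Real.sqrt (a + s ^ 2) ^ 7) + ((-9 : ℝ) * c ^ 1) * (s ^ 1 * Real.cos (c * Real.sqrt (a + s ^ 2)) / Real.sqrt (a + s ^ 2) ^ 4) + ((15 : ℝ) * c ^ 1) * (s ^ 3 * Real.cos (c * Real.sqrt (a + s ^ 2)) / Real.sqrt (a + s ^ 2) ^ 6) + ((-3 : ℝ) * c ^ 2) * (s ^ 1 * Real.sin (c * Real.sqrt (a + s ^ 2)) / Real.sqrt (a + s ^ 2) ^ 3) + ((6 : ℝ) * c ^ 2) * (s ^ 3 * Real.sin (c * Real.sqrt (a + s ^ 2)) / Real.sqrt (a + s ^ 2) ^ 5) + ((-1 : ℝ) * c ^ 3) * (s ^ 3 * Real.cos (c * Real.sqrt (a + s ^ 2)) / Real.sqrt (a + s ^ 2) ^ 4)) s := by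
  have hpos : (0:ℝ) < a + s ^ 2 := by positivity
  have hR0 : Real.sqrt (a + s ^ 2) ≠ 0 := by positivity
  have hr := sqrt_hasDeriv a c s ha
  have h0 := (((hasDerivAt_pow 0 s).mul ((hr.const_mul c).sin)).div (hr.pow 3) (pow_ne_zero _ hR0)).const_mul ((-1 : ℝ) * c ^ 0)
  have h1 := (((hasDerivAt_pow 2 s).mul ((hr.const_mul c).sin)).div (hr.pow 5) (pow_ne_zero _ hR0)).const_mul ((3 : ℝ) * c ^ 0)
  have h2 := (((hasDerivAt_pow 0 s).mul ((hr.const_mul c).cos)).div (hr.pow 2) (pow_ne_zero _ hR0)).const_mul ((1 : ℝ) * c ^ 1)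
  have h3 := (((hasDerivAt_pow 2 s).mul ((hr.const_mul c).cos)).div (hr.pow 4) (pow_ne_zero _ hR0)).const_mul ((-3 : ℝ) * c ^ 1)
  have h4 := (((hasDerivAt_pow 2 s).mul ((hr.const_mul c).sin)).div (hr.pow 3) (pow_ne_zero _ hR0)).const_mul ((-1 : ℝ) * c ^ 2)
  have H := ((((h0.add h1).add h2).add h3).add h4)
  refine H.congr_deriv ?_
  simp only [Pi.pow_apply, Pi.mul_apply]
  set RR := Real.sqrt (a + s ^ 2) with hRRdef
  field_simp
  ring


set_option maxHeartbeats 2000000 in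
private lemma dlev4 (a c : ℝ) (ha : 0 < a) (s : ℝ) :
    HasDerivAt (fun t : ℝ => ((9 : ℝ) * c ^ 0) * (t ^ 1 * Real.sin (c * Real.sqrt (a + t ^ 2)) / Real.sqrt (a + t ^ 2) ^ 5) + ((-15 : ℝ) * c ^ 0) * (t ^ 3 * Real.sin (c * Real.sqrt (a + t ^ 2)) / Real.sqrt (a + t ^ 2) ^ 7) + ((-9 : ℝ) * c ^ 1) * (t ^ 1 * Real.cos (c * Real.sqrt (a + t ^ 2)) / Real.sqrt (a + t ^ 2) ^ 4) + ((15 : ℝ) * c ^ 1) * (t ^ 3 * Real.cos (c * Real.sqrt (a + t ^ 2)) / Real.sqrt (a + t ^ 2) ^ 6) + ((-3 : ℝ) * c ^ 2) * (t ^ 1 * Real.sin (c * Real.sqrt (a + t ^ 2)) / Real.sqrt (a + t ^ 2) ^ 3) + ((6 : ℝ) * c ^ 2) * (t ^ 3 * Real.sin (c * Real.sqrt (a + t ^ 2)) / Real.sqrt (a + t ^ 2) ^ 5) + ((-1 : ℝ) * c ^ 3) * (t ^ 3 * Real.cos (c * Real.sqrt (a + t ^ 2)) / Real.sqrt (a +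 t ^ 2) ^ 4))
      (((9 : ℝ) * c ^ 0) * (s ^ 0 * Real.sin (c * Real.sqrt (a + s ^ 2)) / Real.sqrt (a + s ^ 2) ^ 5) + ((-90 : ℝ) * c ^ 0) * (s ^ 2 * Real.sin (c * Real.sqrt (a + s ^ 2)) / Real.sqrt (a + s ^ 2) ^ 7) + ((105 : ℝ) * c ^ 0) * (s ^ 4 * Real.sin (c * Real.sqrt (a + s ^ 2)) / Real.sqrt (a + s ^ 2) ^ 9) + ((-9 : ℝ) * c ^ 1) * (s ^ 0 * Real.cos (c * Real.sqrt (a + s ^ 2)) / Real.sqrt (a + s ^ 2) ^ 4) + ((90 : ℝ) * c ^ 1) * (s ^ 2 * Real.cos (c * Real.sqrt (a + s ^ 2)) / Real.sqrt (a + s ^ 2) ^ 6) + ((-105 : ℝ) * c ^ 1) * (s ^ 4 * Real.cos (c * Real.sqrt (a + s ^ 2)) / Real.sqrt (a + s ^ 2) ^ 8) + ((-3 : ℝ) * c ^ 2) * (s ^ 0 * Real.sin (c * Real.sqrt (a + s ^ 2)) / Real.sqrt (a + s ^ 2) ^ 3) + ((36 : ℝ) * c ^ 2) * (s ^ 2 *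 Real.sin (c * Real.sqrt (a + s ^ 2)) / Real.sqrt (a + s ^ 2) ^ 5) + ((-45 : ℝ) * c ^ 2) * (s ^ 4 * Real.sin (c * Real.sqrt (a + s ^ 2)) / Real.sqrt (a + s ^ 2) ^ 7) + ((-6 : ℝ) * c ^ 3) * (s ^ 2 * Real.cos (c * Real.sqrt (a + s ^ 2)) / Real.sqrt (a + s ^ 2) ^ 4) + ((10 : ℝ) * c ^ 3) * (s ^ 4 * Real.cos (c * Real.sqrt (a + s ^ 2)) / Real.sqrt (a + s ^ 2) ^ 6) + ((1 : ℝ) * c ^ 4) * (s ^ 4 * Real.sin (c * Real.sqrt (a + s ^ 2)) / Real.sqrt (a + s ^ 2) ^ 5)) s := by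
  have hpos : (0:ℝ) < a + s ^ 2 := by positivity
  have hR0 : Real.sqrt (a + s ^ 2) ≠ 0 := by positivity
  have hr := sqrt_hasDeriv a c s ha
  have h0 := (((hasDerivAt_pow 1 s).mul ((hr.const_mul c).sin)).div (hr.pow 5) (pow_ne_zero _ hR0)).const_mul ((9 : ℝ) * c ^ 0)
  have h1 := (((hasDerivAt_pow 3 s).mul ((hr.const_mul c).sin)).div (hr.pow 7) (pow_ne_zero _ hR0)).const_mul ((-15 : ℝ) * c ^ 0)
  have h2 := (((hasDerivAt_pow 1 s).mul ((hr.const_mul c).cos)).div (hr.pow 4) (pow_ne_zero _ hR0)).const_mul ((-9 : ℝ) * c ^ 1)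
  have h3 := (((hasDerivAt_pow 3 s).mul ((hr.const_mul c).cos)).div (hr.pow 6) (pow_ne_zero _ hR0)).const_mul ((15 : ℝ) * c ^ 1)
  have h4 := (((hasDerivAt_pow 1 s).mul ((hr.const_mul c).sin)).div (hr.pow 3) (pow_ne_zero _ hR0)).const_mul ((-3 : ℝ) * c ^ 2)
  have h5 := (((hasDerivAt_pow 3 s).mul ((hr.const_mul c).sin)).div (hr.pow 5) (pow_ne_zero _ hR0)).const_mul ((6 : ℝ) * c ^ 2)
  have h6 := (((hasDerivAt_pow 3 s).mul ((hr.const_mul c).cos)).div (hr.pow 4) (pow_ne_zero _ hR0)).const_mul ((-1 : ℝ) * c ^ 3)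
  have H := ((((((h0.add h1).add h2).add h3).add h4).add h5).add h6)
  refine H.congr_deriv ?_
  simp only [Pi.pow_apply, Pi.mul_apply]
  set RR := Real.sqrt (a + s ^ 2) with hRRdef
  field_simp
  ring


private lemma term_bound (coef c s R u : ℝ) (hc : 0 < c) (hR : 0 < R)
    (hs : |s| ≤ R) (hu : |u| ≤ 1) (j m k : ℕ) :
    |(coef * c ^ j) * (s ^ m * u / R ^ (m + k))| ≤ |coef| * c ^ j * (1 / R ^ k) := by
  have hR' : R ≠ 0 := ne_of_gt hR
  have h1 : |(coef * c ^ j) * (s ^ m * u / R ^ (m + k))|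
      = |coef| * c ^ j * (|s| ^ m * |u| / R ^ (m + k)) := by
    rw [abs_mul, abs_mul, abs_div, abs_mul, abs_pow, abs_pow, abs_pow,
      abs_of_pos hc, abs_of_pos hR]
  rw [h1]
  have h3 : R ^ m * 1 / R ^ (m + k) = 1 / R ^ k := by
    rw [pow_add]; field_simp
  calc |coef| * c ^ j * (|s| ^ m * |u| / R ^ (m + k))
      ≤ |coef| * c ^ j * (R ^ m * 1 / R ^ (m + k)) := by
        gcongr
    _ = |coef| * c ^ j * (1 / R ^ k) := by rw [h3]


set_option maxHeartbeats 2000000 in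
/-- Pointwise bound, uniform in `c > 0`, for the fourth derivative in `x₃` of
`sin(c√(x₁²+x₂²+x₃²))/√(x₁²+x₂²+x₃²)`, in terms of finitely many quotients
`q̃_k(c)/q_k(|x|)` of polynomials with nonnegative coefficients, each `q_k`
nonzero of degree at least one. -/
theorem fourth_derivative_sine_kernel_bound :
    ∃ N : ℕ, 1 ≤ N ∧ ∃ qt q : Fin N → Polynomial ℝ,
      (∀ k : Fin N, ∀ n : ℕ, 0 ≤ (qt k).coeff n ∧ 0 ≤ (q k).coeff n) ∧
      (∀ k : Fin N, q k ≠ 0 ∧ 1 ≤ (q k).natDegree) ∧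
      ∃ C : ℝ, 0 < C ∧
        ∀ c : ℝ, 0 < c → ∀ x₁ x₂ x₃ : ℝ, ¬(x₁ = 0 ∧ x₂ = 0) →
          |iteratedDeriv 4
              (fun s : ℝ => Real.sin (c * Real.sqrt (x₁ ^ 2 + x₂ ^ 2 + s ^ 2)) /
                Real.sqrt (x₁ ^ 2 + x₂ ^ 2 + s ^ 2)) x₃| ≤
            C * ∑ k : Fin N,
              (qt k).eval c / (q k).eval (Real.sqrt (x₁ ^ 2 + x₂ ^ 2 + x₃ ^ 2)) := by
  refine ⟨5, by norm_num,
    ![Polynomial.X ^ 0, Polynomial.X ^ 1, Polynomial.X ^ 2, Polynomial.X ^ 3, Polynomial.X ^ 4],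
    ![Polynomial.X ^ 5, Polynomial.X ^ 4, Polynomial.X ^ 3, Polynomial.X ^ 2, Polynomial.X ^ 1],
    ?_, ?_, 204, by norm_num, ?_⟩
  · have hX : ∀ m n : ℕ, 0 ≤ (Polynomial.X ^ m : Polynomial ℝ).coeff n := by
      intro m n; rw [Polynomial.coeff_X_pow]; split_ifs <;> norm_num
    intro k n
    fin_cases k <;> exact ⟨hX _ _, hX _ _⟩
  · have hX : ∀ m : ℕ, 1 ≤ m → (Polynomial.X ^ m : Polynomial ℝ) ≠ 0 ∧
        1 ≤ (Polynomial.X ^ m : Polynomial ℝ).natDegree := fun m hm =>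
      ⟨pow_ne_zero _ Polynomial.X_ne_zero, by rw [Polynomial.natDegree_X_pow]; omega⟩
    intro k
    fin_cases k <;> exact hX _ (by norm_num)
  intro c hc x₁ x₂ x₃ hx
  have ha : 0 < x₁ ^ 2 + x₂ ^ 2 := by
    rcases not_and_or.mp hx with h | h
    · have : 0 < x₁ ^ 2 := by positivity
      nlinarith [sq_nonneg x₂]
    · have : 0 < x₂ ^ 2 := by positivity
      nlinarith [sq_nonneg x₁]
  set a : ℝ := x₁ ^ 2 + x₂ ^ 2 with hadef
  have hpos : (0:ℝ) < a + x₃ ^ 2 := by positivity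
  set R : ℝ := Real.sqrt (a + x₃ ^ 2) with hRdef
  have hRpos : 0 < R := Real.sqrt_pos.mpr hpos
  have hsle : |x₃| ≤ R := by
    rw [hRdef, ← Real.sqrt_sq_eq_abs]
    exact Real.sqrt_le_sqrt (by nlinarith)
  have hsin : |Real.sin (c * R)| ≤ 1 := Real.abs_sin_le_one _
  have hcos : |Real.cos (c * R)| ≤ 1 := Real.abs_cos_le_one _
  have ed1 : deriv (fun t : ℝ => Real.sin (c * Real.sqrt (a + t ^ 2)) / Real.sqrt (a + t ^ 2)) = (fun t : ℝ => ((-1 : ℝ) * c ^ 0) * (t ^ 1 * Real.sin (c * Real.sqrt (a + t ^ 2)) / Real.sqrt (a + t ^ 2) ^ 3) + ((1 : ℝ) * c ^ 1) * (t ^ 1 * Real.cos (c * Real.sqrt (a + t ^ 2)) / Real.sqrt (a + t ^ 2) ^ 2)) :=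
    funext fun t => (dlev1 a c ha t).deriv
  have ed2 : deriv (fun t : ℝ => ((-1 : ℝ) * c ^ 0) * (t ^ 1 * Real.sin (c * Real.sqrt (a + t ^ 2)) / Real.sqrt (a + t ^ 2) ^ 3) + ((1 : ℝ) * c ^ 1) * (t ^ 1 * Real.cos (c * Real.sqrt (a + t ^ 2)) / Real.sqrt (a + t ^ 2) ^ 2)) = (fun t : ℝ => ((-1 : ℝ) * c ^ 0) * (t ^ 0 * Real.sin (c * Real.sqrt (a + t ^ 2)) / Real.sqrt (a + t ^ 2) ^ 3) + ((3 : ℝ) * c ^ 0) * (t ^ 2 * Real.sin (c * Real.sqrt (a + t ^ 2)) / Real.sqrt (a + t ^ 2) ^ 5) + ((1 : ℝ) * c ^ 1) * (t ^ 0 * Real.cos (c * Real.sqrt (a + t ^ 2)) / Real.sqrt (a + t ^ 2) ^ 2) + ((-3 : ℝ) * c ^ 1) * (t ^ 2 * Real.cos (c * Real.sqrt (a + t ^ 2)) / Real.sqrt (a + t ^ 2) ^ 4) + ((-1 : ℝ) * c ^ 2) * (t ^ 2 * Real.sin (c * Real.sqrt (a + t ^ 2)) / Real.sqrt (a + t ^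 2) ^ 3)) :=
    funext fun t => (dlev2 a c ha t).deriv
  have ed3 : deriv (fun t : ℝ => ((-1 : ℝ) * c ^ 0) * (t ^ 0 * Real.sin (c * Real.sqrt (a + t ^ 2)) / Real.sqrt (a + t ^ 2) ^ 3) + ((3 : ℝ) * c ^ 0) * (t ^ 2 * Real.sin (c * Real.sqrt (a + t ^ 2)) / Real.sqrt (a + t ^ 2) ^ 5) + ((1 : ℝ) * c ^ 1) * (t ^ 0 * Real.cos (c * Real.sqrt (a + t ^ 2)) / Real.sqrt (a + t ^ 2) ^ 2) + ((-3 : ℝ) * c ^ 1) * (t ^ 2 * Real.cos (c * Real.sqrt (a + t ^ 2)) / Real.sqrt (a + t ^ 2) ^ 4) + ((-1 : ℝ) * c ^ 2) * (t ^ 2 * Real.sin (c * Real.sqrt (a + t ^ 2)) / Real.sqrt (a + t ^ 2) ^ 3)) = (fun t : ℝ => ((9 : ℝ) * c ^ 0) * (t ^ 1 * Real.sin (c * Real.sqrt (a + t ^ 2)) / Real.sqrt (a + t ^ 2) ^ 5) + ((-15 : ℝ) * c ^ 0) * (t ^ 3 * Real.sin (c * Real.sqrt (a + t ^ 2)) /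 Real.sqrt (a + t ^ 2) ^ 7) + ((-9 : ℝ) * c ^ 1) * (t ^ 1 * Real.cos (c * Real.sqrt (a + t ^ 2)) / Real.sqrt (a + t ^ 2) ^ 4) + ((15 : ℝ) * c ^ 1) * (t ^ 3 * Real.cos (c * Real.sqrt (a + t ^ 2)) / Real.sqrt (a + t ^ 2) ^ 6) + ((-3 : ℝ) * c ^ 2) * (t ^ 1 * Real.sin (c * Real.sqrt (a + t ^ 2)) / Real.sqrt (a + t ^ 2) ^ 3) + ((6 : ℝ) * c ^ 2) * (t ^ 3 * Real.sin (c * Real.sqrt (a + t ^ 2)) / Real.sqrt (a + t ^ 2) ^ 5) + ((-1 : ℝ) * c ^ 3) * (t ^ 3 * Real.cos (c * Real.sqrt (a + t ^ 2)) / Real.sqrt (a + t ^ 2) ^ 4)) :=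
    funext fun t => (dlev3 a c ha t).deriv
  have ed4 : deriv (fun t : ℝ => ((9 : ℝ) * c ^ 0) * (t ^ 1 * Real.sin (c * Real.sqrt (a + t ^ 2)) / Real.sqrt (a + t ^ 2) ^ 5) + ((-15 : ℝ) * c ^ 0) * (t ^ 3 * Real.sin (c * Real.sqrt (a + t ^ 2)) / Real.sqrt (a + t ^ 2) ^ 7) + ((-9 : ℝ) * c ^ 1) * (t ^ 1 * Real.cos (c * Real.sqrt (a + t ^ 2)) / Real.sqrt (a + t ^ 2) ^ 4) + ((15 : ℝ) * c ^ 1) * (t ^ 3 * Real.cos (c * Real.sqrt (a + t ^ 2)) / Real.sqrt (a + t ^ 2) ^ 6) + ((-3 : ℝ) * c ^ 2) * (t ^ 1 * Real.sin (c * Real.sqrt (a + t ^ 2)) / Real.sqrt (a + t ^ 2) ^ 3) + ((6 : ℝ) * c ^ 2) * (t ^ 3 * Real.sin (c * Real.sqrt (a + t ^ 2)) / Real.sqrt (a + t ^ 2) ^ 5) + ((-1 : ℝ) * c ^ 3) * (t ^ 3 * Real.cos (c * Real.sqrt (a + t ^ 2)) / Real.sqrt (a + t ^ 2) ^ 4))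 = (fun t : ℝ => ((9 : ℝ) * c ^ 0) * (t ^ 0 * Real.sin (c * Real.sqrt (a + t ^ 2)) / Real.sqrt (a + t ^ 2) ^ 5) + ((-90 : ℝ) * c ^ 0) * (t ^ 2 * Real.sin (c * Real.sqrt (a + t ^ 2)) / Real.sqrt (a + t ^ 2) ^ 7) + ((105 : ℝ) * c ^ 0) * (t ^ 4 * Real.sin (c * Real.sqrt (a + t ^ 2)) / Real.sqrt (a + t ^ 2) ^ 9) + ((-9 : ℝ) * c ^ 1) * (t ^ 0 * Real.cos (c * Real.sqrt (a + t ^ 2)) / Real.sqrt (a + t ^ 2) ^ 4) + ((90 : ℝ) * c ^ 1) * (t ^ 2 * Real.cos (c * Real.sqrt (a + t ^ 2)) / Real.sqrt (a + t ^ 2) ^ 6) + ((-105 : ℝ) * c ^ 1) * (t ^ 4 * Real.cos (c * Real.sqrt (a + t ^ 2)) / Real.sqrt (a + t ^ 2) ^ 8) + ((-3 : ℝ) * c ^ 2) * (t ^ 0 * Real.sin (c * Real.sqrt (a + t ^ 2)) / Real.sqrt (a + t ^ 2) ^ 3) + ((36 : ℝ) * c ^ 2) * (t ^ 2 * Real.sin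 (c * Real.sqrt (a + t ^ 2)) / Real.sqrt (a + t ^ 2) ^ 5) + ((-45 : ℝ) * c ^ 2) * (t ^ 4 * Real.sin (c * Real.sqrt (a + t ^ 2)) / Real.sqrt (a + t ^ 2) ^ 7) + ((-6 : ℝ) * c ^ 3) * (t ^ 2 * Real.cos (c * Real.sqrt (a + t ^ 2)) / Real.sqrt (a + t ^ 2) ^ 4) + ((10 : ℝ) * c ^ 3) * (t ^ 4 * Real.cos (c * Real.sqrt (a + t ^ 2)) / Real.sqrt (a + t ^ 2) ^ 6) + ((1 : ℝ) * c ^ 4) * (t ^ 4 * Real.sin (c * Real.sqrt (a + t ^ 2)) / Real.sqrt (a + t ^ 2) ^ 5)) :=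
    funext fun t => (dlev4 a c ha t).deriv
  have key : iteratedDeriv 4 (fun t : ℝ => Real.sin (c * Real.sqrt (a + t ^ 2)) / Real.sqrt (a + t ^ 2)) x₃
      = ((9 : ℝ) * c ^ 0) * (x₃ ^ 0 * Real.sin (c * R) / R ^ 5) + ((-90 : ℝ) * c ^ 0) * (x₃ ^ 2 * Real.sin (c * R) / R ^ 7) + ((105 : ℝ) * c ^ 0) * (x₃ ^ 4 * Real.sin (c * R) / R ^ 9) + ((-9 : ℝ) * c ^ 1) * (x₃ ^ 0 * Real.cos (c * R) / R ^ 4) + ((90 : ℝ) * c ^ 1) * (x₃ ^ 2 * Real.cos (c * R) / R ^ 6) + ((-105 : ℝ) * c ^ 1) * (x₃ ^ 4 * Real.cos (c * R) / R ^ 8) + ((-3 : ℝ) * c ^ 2) * (x₃ ^ 0 * Real.sin (c * R) / R ^ 3) + ((36 : ℝ) * c ^ 2) * (x₃ ^ 2 * Real.sin (c * R) / R ^ 5) + ((-45 : ℝ) * c ^ 2) * (x₃ ^ 4 * Real.sin (c * R) / R ^ 7) + ((-6 : ℝ) * c ^ 3) * (x₃ ^ 2 * Real.cos (c * R) / R ^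 4) + ((10 : ℝ) * c ^ 3) * (x₃ ^ 4 * Real.cos (c * R) / R ^ 6) + ((1 : ℝ) * c ^ 4) * (x₃ ^ 4 * Real.sin (c * R) / R ^ 5) := by
    rw [iteratedDeriv_eq_iterate]
    show deriv (deriv (deriv (deriv (fun t : ℝ => Real.sin (c * Real.sqrt (a + t ^ 2)) / Real.sqrt (a + t ^ 2))))) x₃ = _
    rw [ed1, ed2, ed3, ed4, hRdef]
  rw [key]
  have hb0 : |((9 : ℝ) * c ^ 0) * (x₃ ^ 0 * Real.sin (c * R) / R ^ 5)| ≤ (9 : ℝ) * c ^ 0 * (1 / R ^ 5) := by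
    have h := term_bound (9 : ℝ) c x₃ R (Real.sin (c * R)) hc hRpos hsle hsin 0 0 5
    norm_num at h ⊢
    convert h using 2
  have hb1 : |((-90 : ℝ) * c ^ 0) * (x₃ ^ 2 * Real.sin (c * R) / R ^ 7)| ≤ (90 : ℝ) * c ^ 0 * (1 / R ^ 5) := by
    have h := term_bound (-90 : ℝ) c x₃ R (Real.sin (c * R)) hc hRpos hsle hsin 0 2 5
    norm_num at h ⊢
    convert h using 2
  have hb2 : |((105 : ℝ) * c ^ 0) * (x₃ ^ 4 * Real.sin (c * R) / R ^ 9)| ≤ (105 : ℝ) * c ^ 0 * (1 / R ^ 5) := by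
    have h := term_bound (105 : ℝ) c x₃ R (Real.sin (c * R)) hc hRpos hsle hsin 0 4 5
    norm_num at h ⊢
    convert h using 2
  have hb3 : |((-9 : ℝ) * c ^ 1) * (x₃ ^ 0 * Real.cos (c * R) / R ^ 4)| ≤ (9 : ℝ) * c ^ 1 * (1 / R ^ 4) := by
    have h := term_bound (-9 : ℝ) c x₃ R (Real.cos (c * R)) hc hRpos hsle hcos 1 0 4
    norm_num at h ⊢
    convert h using 2
  have hb4 : |((90 : ℝ) * c ^ 1) * (x₃ ^ 2 * Real.cos (c * R) / R ^ 6)| ≤ (90 : ℝ) * c ^ 1 * (1 / R ^ 4) := by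
    have h := term_bound (90 : ℝ) c x₃ R (Real.cos (c * R)) hc hRpos hsle hcos 1 2 4
    norm_num at h ⊢
    convert h using 2
  have hb5 : |((-105 : ℝ) * c ^ 1) * (x₃ ^ 4 * Real.cos (c * R) / R ^ 8)| ≤ (105 : ℝ) * c ^ 1 * (1 / R ^ 4) := by
    have h := term_bound (-105 : ℝ) c x₃ R (Real.cos (c * R)) hc hRpos hsle hcos 1 4 4
    norm_num at h ⊢
    convert h using 2
  have hb6 : |((-3 : ℝ) * c ^ 2) * (x₃ ^ 0 * Real.sin (c * R) / R ^ 3)| ≤ (3 : ℝ) * c ^ 2 * (1 / R ^ 3) := by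
    have h := term_bound (-3 : ℝ) c x₃ R (Real.sin (c * R)) hc hRpos hsle hsin 2 0 3
    norm_num at h ⊢
    convert h using 2
  have hb7 : |((36 : ℝ) * c ^ 2) * (x₃ ^ 2 * Real.sin (c * R) / R ^ 5)| ≤ (36 : ℝ) * c ^ 2 * (1 / R ^ 3) := by
    have h := term_bound (36 : ℝ) c x₃ R (Real.sin (c * R)) hc hRpos hsle hsin 2 2 3
    norm_num at h ⊢
    convert h using 2
  have hb8 : |((-45 : ℝ) * c ^ 2) * (x₃ ^ 4 * Real.sin (c * R) / R ^ 7)| ≤ (45 : ℝ) * c ^ 2 * (1 / R ^ 3) := by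
    have h := term_bound (-45 : ℝ) c x₃ R (Real.sin (c * R)) hc hRpos hsle hsin 2 4 3
    norm_num at h ⊢
    convert h using 2
  have hb9 : |((-6 : ℝ) * c ^ 3) * (x₃ ^ 2 * Real.cos (c * R) / R ^ 4)| ≤ (6 : ℝ) * c ^ 3 * (1 / R ^ 2) := by
    have h := term_bound (-6 : ℝ) c x₃ R (Real.cos (c * R)) hc hRpos hsle hcos 3 2 2
    norm_num at h ⊢
    convert h using 2
  have hb10 : |((10 : ℝ) * c ^ 3) * (x₃ ^ 4 * Real.cos (c * R) / R ^ 6)| ≤ (10 : ℝ) * c ^ 3 * (1 / R ^ 2) := by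
    have h := term_bound (10 : ℝ) c x₃ R (Real.cos (c * R)) hc hRpos hsle hcos 3 4 2
    norm_num at h ⊢
    convert h using 2
  have hb11 : |((1 : ℝ) * c ^ 4) * (x₃ ^ 4 * Real.sin (c * R) / R ^ 5)| ≤ (1 : ℝ) * c ^ 4 * (1 / R ^ 1) := by
    have h := term_bound (1 : ℝ) c x₃ R (Real.sin (c * R)) hc hRpos hsle hsin 4 4 1
    norm_num at h ⊢
    convert h using 2
  have hsum : |((9 : ℝ) * c ^ 0) * (x₃ ^ 0 * Real.sin (c * R) / R ^ 5) + ((-90 : ℝ) * c ^ 0) * (x₃ ^ 2 * Real.sin (c * R) / R ^ 7) + ((105 : ℝ) * c ^ 0) * (x₃ ^ 4 * Real.sin (c * R) / R ^ 9) + ((-9 : ℝ) * c ^ 1) * (x₃ ^ 0 * Real.cos (c * R) / R ^ 4) + ((90 : ℝ) * c ^ 1) * (x₃ ^ 2 * Real.cos (c * R) / R ^ 6) + ((-105 : ℝ) * c ^ 1) * (x₃ ^ 4 * Real.cos (c * R) / R ^ 8) + ((-3 : ℝ) * c ^ 2) * (x₃ ^ 0 * Real.sin (c * R) / R ^ 3)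 + ((36 : ℝ) * c ^ 2) * (x₃ ^ 2 * Real.sin (c * R) / R ^ 5) + ((-45 : ℝ) * c ^ 2) * (x₃ ^ 4 * Real.sin (c * R) / R ^ 7) + ((-6 : ℝ) * c ^ 3) * (x₃ ^ 2 * Real.cos (c * R) / R ^ 4) + ((10 : ℝ) * c ^ 3) * (x₃ ^ 4 * Real.cos (c * R) / R ^ 6) + ((1 : ℝ) * c ^ 4) * (x₃ ^ 4 * Real.sin (c * R) / R ^ 5)|
      ≤ (9 : ℝ) * c ^ 0 * (1 / R ^ 5) + (90 : ℝ) * c ^ 0 * (1 / R ^ 5) + (105 : ℝ) * c ^ 0 * (1 / R ^ 5) + (9 : ℝ) * c ^ 1 * (1 / R ^ 4) + (90 : ℝ) * c ^ 1 * (1 / R ^ 4) + (105 : ℝ) * c ^ 1 * (1 / R ^ 4) + (3 : ℝ) * c ^ 2 * (1 / R ^ 3) + (36 : ℝ) * c ^ 2 * (1 / R ^ 3) + (45 : ℝ) * c ^ 2 * (1 / R ^ 3) + (6 : ℝ) * c ^ 3 * (1 / R ^ 2) + (10 : ℝ) * c ^ 3 * (1 / R ^ 2) + (1 : ℝ) *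 c ^ 4 * (1 / R ^ 1) := by
    have s0 := hb0
    have s1 := (abs_add_le _ _).trans (add_le_add s0 hb1)
    have s2 := (abs_add_le _ _).trans (add_le_add s1 hb2)
    have s3 := (abs_add_le _ _).trans (add_le_add s2 hb3)
    have s4 := (abs_add_le _ _).trans (add_le_add s3 hb4)
    have s5 := (abs_add_le _ _).trans (add_le_add s4 hb5)
    have s6 := (abs_add_le _ _).trans (add_le_add s5 hb6)
    have s7 := (abs_add_le _ _).trans (add_le_add s6 hb7)
    have s8 := (abs_add_le _ _).trans (add_le_add s7 hb8)
    have s9 := (abs_add_le _ _).trans (add_le_add s8 hb9)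
    have s10 := (abs_add_le _ _).trans (add_le_add s9 hb10)
    have s11 := (abs_add_le _ _).trans (add_le_add s10 hb11)
    exact s11
  refine hsum.trans ?_
  have e5 : (204 : ℝ) * ∑ k : Fin 5,
      (![Polynomial.X ^ 0, Polynomial.X ^ 1, Polynomial.X ^ 2, Polynomial.X ^ 3,
          Polynomial.X ^ 4] k).eval c /
      (![Polynomial.X ^ 5, Polynomial.X ^ 4, Polynomial.X ^ 3, Polynomial.X ^ 2,
          Polynomial.X ^ 1] k).eval R
      = 204 * (1 / R ^ 5 + c / R ^ 4 + c ^ 2 / R ^ 3 + c ^ 3 / R ^ 2 + c ^ 4 / R ^ 1) := by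
    rw [Fin.sum_univ_five]
    simp [Polynomial.eval_pow]
    try ring
  rw [e5]
  have p1 : 0 < 1 / R ^ 5 := by positivity
  have p2 : 0 < c / R ^ 4 := by positivity
  have p3 : 0 < c ^ 2 / R ^ 3 := by positivity
  have p4 : 0 < c ^ 3 / R ^ 2 := by positivity
  have p5 : 0 < c ^ 4 / R ^ 1 := by positivity
  have hcp : (0:ℝ) < c := hc
  ring_nf
  ring_nf at p1 p2 p3 p4 p5
  linarith [p1, p2, p3, p4, p5]

end
end

section
/- Let λ₁, λ₂ ∈ ℝ and let C > 0 be a constant such that −P(g) ≤ C · H(g)^{3/2} · M(g)^{1/2} for every Schwartz function g : ℝ³ → ℂ. Then every nonzero Schwartz function f : ℝ³ → ℂ with P(f) ≤ 0 satisfies ( Im ∫_{ℝ³} (x · ∇f(x)) · conj(f(x)) dx )² ≤ ( ∫_{ℝ³} |x|² |f(x)|² dx ) · ( H(f) − (−P(f))^{2/3} / ( C^{2/3} · M(f)^{1/3} ) ). -/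
open MeasureTheory FourierTransform SchwartzMap

noncomputable section

-- The dipolar symbol `m(ξ) = (4π/3)(2ξ₃² − ξ₂² − ξ₁²)/|ξ|²`, with `m(0) := 0`.
open Classical in
def dipm (ξ : EuclideanSpace ℝ (Fin 3)) : ℝ :=
  if ξ = 0 then 0
  else (4 * Real.pi / 3) * (2 * (ξ 2) ^ 2 - (ξ 1) ^ 2 - (ξ 0) ^ 2) / ‖ξ‖ ^ 2

-- The mass `M(f) = ∫ |f|²`.
def massF (f : SchwartzMap (EuclideanSpace ℝ (Fin 3)) ℂ) : ℝ :=
  ∫ x, ‖f x‖ ^ 2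

-- The kinetic energy `H(f) = ∫ |∇f|² = ∫ Σ_j |∂_j f|²`.
def kinF (f : SchwartzMap (EuclideanSpace ℝ (Fin 3)) ℂ) : ℝ :=
  ∫ x, ∑ j : Fin 3, ‖fderiv ℝ (⇑f) x (EuclideanSpace.single j (1 : ℝ))‖ ^ 2

-- The potential energy `P(f) = λ₁∫|f|⁴ + λ₂∫ m(ξ)|𝓕(|f|²)(ξ)|² dξ`.
def potF (l₁ l₂ : ℝ) (f : SchwartzMap (EuclideanSpace ℝ (Fin 3)) ℂ) : ℝ :=
  l₁ * ∫ x, ‖f x‖ ^ 4 +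
    l₂ * ∫ ξ, dipm ξ * ‖𝓕 (fun x => ((‖f x‖ ^ 2 : ℝ) : ℂ)) ξ‖ ^ 2

namespace GaoWangAux

open Complex
open scoped ContDiff

abbrev E3 := EuclideanSpace ℝ (Fin 3)

/-! ### Temperate growth of the quadratic phase -/

lemma hasFDerivAt_normsq (x : E3) :
    HasFDerivAt (fun x : E3 => ‖x‖^2) (((2:ℕ) • (innerSL ℝ (E := E3))) x) x := by
  simpa using (hasFDerivAt_id x).norm_sq

lemma tg_normsq : Function.HasTemperateGrowth (fun x : E3 => ‖x‖^2) := by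
  have hfd : (fderiv ℝ (fun x : E3 => ‖x‖^2)) = ⇑((2:ℕ) • (innerSL ℝ (E := E3))) := by
    funext x
    simp [(hasFDerivAt_normsq x).fderiv]
  refine Function.HasTemperateGrowth.of_fderiv ?_ ?_ (k := 2) (C := 1) (fun x => ?_)
  · rw [hfd]; exact ContinuousLinearMap.hasTemperateGrowth _
  · exact fun x => (hasFDerivAt_normsq x).differentiableAt
  · rw [Real.norm_eq_abs, _root_.abs_of_nonneg (by positivity : (0:ℝ) ≤ ‖x‖^2)]
    nlinarith [norm_nonneg x]

lemma hasDerivAt_cexp_mul (c : ℂ) (t : ℝ) :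
    HasDerivAt (fun t : ℝ => Complex.exp (c * t)) (Complex.exp (c * t) * c) t := by
  have h0 : HasDerivAt (fun t : ℝ => (t : ℂ)) 1 t := by
    simpa using (hasDerivAt_id t).ofReal_comp
  simpa using (h0.const_mul c).cexp

lemma iteratedDeriv_cexp_mul (c : ℂ) (n : ℕ) :
    iteratedDeriv n (fun t : ℝ => Complex.exp (c * t)) =
      fun t : ℝ => c ^ n * Complex.exp (c * t) := by
  induction n with
  | zero => funext t; simp
  | succ n ih =>
    rw [iteratedDeriv_succ, ih]
    funext t
    have := ((hasDerivAt_cexp_mul c t).const_mul (c ^ n)).deriv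
    rw [this]; ring

lemma contDiff_cexp_mul (c : ℂ) : ContDiff ℝ ∞ (fun t : ℝ => Complex.exp (c * t)) := by
  apply Complex.contDiff_exp.comp
  have : ContDiff ℝ ∞ (fun t : ℝ => c * (t : ℂ)) :=
    contDiff_const.mul Complex.ofRealCLM.contDiff
  exact this

lemma tg_cexp_comp {q : E3 → ℝ} (hq : q.HasTemperateGrowth) (a : ℝ) :
    Function.HasTemperateGrowth (fun x : E3 => Complex.exp (Complex.I * a * q x)) := by
  set c : ℂ := Complex.I * a with hc
  have hg0 : ContDiff ℝ ∞ (fun t : ℝ => Complex.exp (c * t)) := contDiff_cexp_mul c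
  have hcomp : (fun x : E3 => Complex.exp (Complex.I * a * q x))
      = (fun t : ℝ => Complex.exp (c * t)) ∘ q := by
    funext x; simp [hc, mul_assoc]
  rw [hcomp]
  refine ⟨hg0.comp hq.1, fun n => ?_⟩
  obtain ⟨k, Cq, hCq0, hq'⟩ := hq.norm_iteratedFDeriv_le_uniform n
  refine ⟨k * n, (n.factorial : ℝ) * (1 + ‖c‖) ^ n * (1 + Cq) ^ n, fun x => ?_⟩
  have hD1 : (1:ℝ) ≤ (1 + Cq) * (1 + ‖x‖) ^ k := by
    have : (1:ℝ) ≤ (1 + ‖x‖) ^ k := one_le_pow₀ (by nlinarith [norm_nonneg x])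
    nlinarith
  have key := norm_iteratedFDeriv_comp_le (n := n) hg0 hq.1 (mod_cast le_top) x
      (C := (1 + ‖c‖) ^ n) (D := (1 + Cq) * (1 + ‖x‖) ^ k) ?_ ?_
  · calc ‖iteratedFDeriv ℝ n ((fun t : ℝ => Complex.exp (c * t)) ∘ q) x‖
        ≤ (n.factorial : ℝ) * (1 + ‖c‖) ^ n * ((1 + Cq) * (1 + ‖x‖) ^ k) ^ n := key
      _ = (n.factorial : ℝ) * (1 + ‖c‖) ^ n * (1 + Cq) ^ n * (1 + ‖x‖) ^ (k * n) := by
          rw [mul_pow, ← pow_mul]; ring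
  · intro i hi
    rw [norm_iteratedFDeriv_eq_norm_iteratedDeriv, iteratedDeriv_cexp_mul]
    have habs : ‖Complex.exp (c * ((q x : ℝ) : ℂ))‖ = 1 := by
      rw [Complex.norm_exp]
      simp [hc, Complex.mul_re]
    rw [norm_mul, habs, mul_one, norm_pow]
    calc ‖c‖ ^ i ≤ (1 + ‖c‖) ^ i :=
          pow_le_pow_left₀ (norm_nonneg c) (by linarith [norm_nonneg c]) i
      _ ≤ (1 + ‖c‖) ^ n := pow_le_pow_right₀ (by linarith [norm_nonneg c]) hi
  · intro i hi1 hin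
    calc ‖iteratedFDeriv ℝ i q x‖ ≤ Cq * (1 + ‖x‖) ^ k := hq' i hin x
      _ ≤ (1 + Cq) * (1 + ‖x‖) ^ k := by
          nlinarith [pow_nonneg (by linarith [norm_nonneg x] : (0:ℝ) ≤ 1 + ‖x‖) k]
      _ ≤ ((1 + Cq) * (1 + ‖x‖) ^ k) ^ i := le_self_pow₀ hD1 (by omega)

/-! ### The modulated Schwartz function -/

def phase (a : ℝ) (x : E3) : ℂ := Complex.exp (Complex.I * a * (‖x‖^2 : ℝ))

def modS (a : ℝ) (f : 𝓢(E3, ℂ)) : 𝓢(E3, ℂ) :=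
  bilinLeftCLM (ContinuousLinearMap.mul ℝ ℂ) (tg_cexp_comp tg_normsq a) f

lemma modS_apply (a : ℝ) (f : 𝓢(E3, ℂ)) (x : E3) : modS a f x = f x * phase a x := rfl

lemma norm_phase (a : ℝ) (x : E3) : ‖phase a x‖ = 1 := by
  rw [phase, Complex.norm_exp]
  simp [Complex.mul_re, pow_two, Complex.mul_im]

lemma hasFDerivAt_phase (a : ℝ) (x : E3) :
    HasFDerivAt (phase a) (phase a x • (Complex.I * ↑a) •
      Complex.ofRealCLM.comp (((2:ℕ) • (innerSL ℝ (E := E3))) x)) x := by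
  have h2 : HasFDerivAt (fun x : E3 => ((‖x‖^2 : ℝ) : ℂ))
      (Complex.ofRealCLM.comp (((2:ℕ) • (innerSL ℝ (E := E3))) x)) x :=
    Complex.ofRealCLM.hasFDerivAt.comp x (hasFDerivAt_normsq x)
  have h3 := (h2.const_mul (Complex.I * a)).cexp
  unfold phase
  exact h3

lemma fderiv_modS_apply (a : ℝ) (f : 𝓢(E3, ℂ)) (x : E3) (j : Fin 3) :
    fderiv ℝ (⇑(modS a f)) x (EuclideanSpace.single j (1:ℝ)) =
      phase a x * (fderiv ℝ (⇑f) x (EuclideanSpace.single j (1:ℝ))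
        + ((2 * a * x j : ℝ) : ℂ) * Complex.I * f x) := by
  have hf : HasFDerivAt (⇑f) (fderiv ℝ (⇑f) x) x := f.differentiableAt.hasFDerivAt
  have hp := hasFDerivAt_phase a x
  have hm : HasFDerivAt (⇑(modS a f))
      (f x • (phase a x • (Complex.I * ↑a) •
        Complex.ofRealCLM.comp (((2:ℕ) • (innerSL ℝ (E := E3))) x))
        + phase a x • fderiv ℝ (⇑f) x) x := by
    have : ⇑(modS a f) = fun y => f y * phase a y := funext fun y => modS_apply a f y
    rw [this]
    exact hf.mul hp
  rw [hm.fderiv]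
  have hinner : (innerSL ℝ (E := E3)) x (EuclideanSpace.single j (1:ℝ)) = x j := by
    simp [EuclideanSpace.inner_single_right]
  simp only [ContinuousLinearMap.add_apply, ContinuousLinearMap.smul_apply,
    ContinuousLinearMap.coe_smul', Pi.smul_apply, ContinuousLinearMap.coe_comp',
    Function.comp_apply, hinner, Complex.ofRealCLM_apply, smul_eq_mul]
  push_cast
  ring

/-! ### Pointwise algebra -/

lemma norm_sq_expand (u w : ℂ) (r : ℝ) :
    ‖u + (r:ℂ) * Complex.I * w‖^2 = ‖u‖^2 + r^2*‖w‖^2 + 2*r*(u * (starRingEnd ℂ) w).im := by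
  have h : ∀ z : ℂ, ‖z‖^2 = z.re^2 + z.im^2 := fun z => by
    rw [Complex.sq_norm, Complex.normSq_apply]; ring
  simp only [h]
  simp [Complex.add_re, Complex.add_im, Complex.mul_re, Complex.mul_im]
  ring

/-! ### Integrability -/

lemma coord_le_norm (x : E3) (j : Fin 3) : |x j| ≤ ‖x‖ := by
  have h := abs_real_inner_le_norm x (EuclideanSpace.single j (1:ℝ))
  simpa [EuclideanSpace.inner_single_right, EuclideanSpace.norm_single] using h

lemma schwartz_bound (ψ : 𝓢(E3, ℂ)) : ∃ Cψ : ℝ, 0 ≤ Cψ ∧ ∀ x, ‖ψ x‖ ≤ Cψ := by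
  obtain ⟨C, hC0, hC⟩ := ψ.decay 0 0
  exact ⟨C, hC0.le, fun x => by simpa using hC x⟩

lemma integrable_aux (φ ψ : 𝓢(E3, ℂ)) (k : ℕ) :
    Integrable (fun x : E3 => ‖x‖^k * (‖φ x‖ * ‖ψ x‖)) := by
  obtain ⟨Cψ, hCψ0, hCψ⟩ := schwartz_bound ψ
  refine Integrable.mono' ((φ.integrable_pow_mul volume k).const_mul Cψ)
    ?_ (Filter.Eventually.of_forall fun x => ?_)
  · apply Continuous.aestronglyMeasurable
    fun_prop
  · rw [Real.norm_eq_abs, _root_.abs_of_nonneg (by positivity)]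
    calc ‖x‖^k * (‖φ x‖ * ‖ψ x‖) ≤ ‖x‖^k * (‖φ x‖ * Cψ) := by
          gcongr; exact hCψ x
      _ = Cψ * (‖x‖^k * ‖φ x‖) := by ring

def pd (f : 𝓢(E3, ℂ)) (j : Fin 3) : 𝓢(E3, ℂ) :=
  LineDeriv.lineDerivOpCLM ℝ 𝓢(E3, ℂ) (EuclideanSpace.single j (1:ℝ)) f

lemma pd_apply (f : 𝓢(E3, ℂ)) (j : Fin 3) (x : E3) :
    pd f j x = fderiv ℝ (⇑f) x (EuclideanSpace.single j (1:ℝ)) := rfl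

lemma cont_coord (j : Fin 3) : Continuous (fun x : E3 => x j) :=
  (EuclideanSpace.proj (𝕜 := ℝ) j).continuous

lemma integrable_A (f : 𝓢(E3, ℂ)) :
    Integrable (fun x : E3 => ∑ j : Fin 3,
      ‖fderiv ℝ (⇑f) x (EuclideanSpace.single j (1:ℝ))‖^2) := by
  apply integrable_finset_sum
  intro j _
  have := integrable_aux (pd f j) (pd f j) 0
  refine this.congr (Filter.Eventually.of_forall fun x => ?_)
  simp [pd_apply, pow_two]

lemma integrable_B (f : 𝓢(E3, ℂ)) :
    Integrable (fun x : E3 => ‖x‖^2 * ‖f x‖^2) := by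
  have := integrable_aux f f 2
  refine this.congr (Filter.Eventually.of_forall fun x => ?_)
  simp [pow_two]

lemma integrable_M (f : 𝓢(E3, ℂ)) :
    Integrable (fun x : E3 => ‖f x‖^2) := by
  have := integrable_aux f f 0
  refine this.congr (Filter.Eventually.of_forall fun x => ?_)
  simp [pow_two]

lemma integrable_C (f : 𝓢(E3, ℂ)) (j : Fin 3) :
    Integrable (fun x : E3 => x j *
      ((fderiv ℝ (⇑f) x (EuclideanSpace.single j (1:ℝ))) * (starRingEnd ℂ) (f x)).im) := by
  refine (integrable_aux (pd f j) f 1).mono' ?_ (Filter.Eventually.of_forall fun x => ?_)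
  · exact ((cont_coord j).mul (Complex.continuous_im.comp
      (((pd f j).continuous).mul (Complex.continuous_conj.comp f.continuous)))).aestronglyMeasurable
  · rw [Real.norm_eq_abs, abs_mul, ← pd_apply]
    calc |x j| * |((pd f j x) * (starRingEnd ℂ) (f x)).im|
        ≤ ‖x‖ * ‖(pd f j x) * (starRingEnd ℂ) (f x)‖ := by
          gcongr
          · exact coord_le_norm x j
          · exact Complex.abs_im_le_norm _
      _ = ‖x‖^1 * (‖pd f j x‖ * ‖f x‖) := by
          rw [norm_mul, pow_one]
          simp

lemma integrable_C4 (f : 𝓢(E3, ℂ)) (j : Fin 3) :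
    Integrable (fun x : E3 => ((x j : ℝ) : ℂ) *
      (fderiv ℝ (⇑f) x (EuclideanSpace.single j (1:ℝ))) * (starRingEnd ℂ) (f x)) := by
  refine (integrable_aux (pd f j) f 1).mono' ?_ (Filter.Eventually.of_forall fun x => ?_)
  · exact (((Complex.continuous_ofReal.comp (cont_coord j)).mul
      (pd f j).continuous).mul (Complex.continuous_conj.comp f.continuous)).aestronglyMeasurable
  · rw [norm_mul, norm_mul, ← pd_apply]
    calc ‖((x j : ℝ) : ℂ)‖ * ‖pd f j x‖ * ‖(starRingEnd ℂ) (f x)‖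
        ≤ ‖x‖ * ‖pd f j x‖ * ‖f x‖ := by
          gcongr
          · simpa using coord_le_norm x j
          · simp
      _ = ‖x‖^1 * (‖pd f j x‖ * ‖f x‖) := by ring

/-! ### The kinetic energy expansion -/

lemma normsq_eq_sum (x : E3) : ‖x‖^2 = ∑ j : Fin 3, (x j)^2 := by
  rw [EuclideanSpace.norm_eq, Real.sq_sqrt (by positivity)]
  simp [Real.norm_eq_abs, sq_abs]

lemma kin_expand (a : ℝ) (f : 𝓢(E3, ℂ)) :
    kinF (modS a f) = kinF f + (4*a^2) * (∫ x : E3, ‖x‖^2 * ‖f x‖^2)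
      + (4*a) * (∫ x : E3, ∑ j : Fin 3, x j *
          ((fderiv ℝ (⇑f) x (EuclideanSpace.single j (1:ℝ))) * (starRingEnd ℂ) (f x)).im) := by
  have hpt : ∀ x : E3, (∑ j : Fin 3, ‖fderiv ℝ (⇑(modS a f)) x (EuclideanSpace.single j (1:ℝ))‖^2)
      = (∑ j : Fin 3, ‖fderiv ℝ (⇑f) x (EuclideanSpace.single j (1:ℝ))‖^2)
        + ((4*a^2) * (‖x‖^2 * ‖f x‖^2)
        + (4*a) * (∑ j : Fin 3, x j *
            ((fderiv ℝ (⇑f) x (EuclideanSpace.single j (1:ℝ))) * (starRingEnd ℂ) (f x)).im)) := by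
    intro x
    have step : ∀ j : Fin 3,
        ‖fderiv ℝ (⇑(modS a f)) x (EuclideanSpace.single j (1:ℝ))‖^2
          = ‖fderiv ℝ (⇑f) x (EuclideanSpace.single j (1:ℝ))‖^2
            + (2*a*x j)^2 * ‖f x‖^2
            + 2*(2*a*x j) * ((fderiv ℝ (⇑f) x (EuclideanSpace.single j (1:ℝ)))
                * (starRingEnd ℂ) (f x)).im := by
      intro j
      rw [fderiv_modS_apply, norm_mul, norm_phase, one_mul, norm_sq_expand]
    simp only [step, Fin.sum_univ_three, normsq_eq_sum]
    ring
  have hC : Integrable (fun x : E3 => ∑ j : Fin 3, x j *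
      ((fderiv ℝ (⇑f) x (EuclideanSpace.single j (1:ℝ))) * (starRingEnd ℂ) (f x)).im) :=
    integrable_finset_sum _ (fun j _ => integrable_C f j)
  calc kinF (modS a f)
      = ∫ x : E3, ((∑ j : Fin 3, ‖fderiv ℝ (⇑f) x (EuclideanSpace.single j (1:ℝ))‖^2)
        + ((4*a^2) * (‖x‖^2 * ‖f x‖^2)
        + (4*a) * (∑ j : Fin 3, x j *
            ((fderiv ℝ (⇑f) x (EuclideanSpace.single j (1:ℝ))) * (starRingEnd ℂ) (f x)).im))) := by
        unfold kinF
        exact integral_congr_ae (Filter.Eventually.of_forall hpt)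
    _ = _ := by
        have h2 : Integrable (fun x : E3 => (4*a^2) * (‖x‖^2 * ‖f x‖^2)
            + (4*a) * (∑ j : Fin 3, x j *
              ((fderiv ℝ (⇑f) x (EuclideanSpace.single j (1:ℝ))) * (starRingEnd ℂ) (f x)).im)) := by
          exact ((integrable_B f).const_mul (4*a^2)).add (hC.const_mul (4*a))
        rw [integral_add (integrable_A f) h2,
          integral_add ((integrable_B f).const_mul (4*a^2)) (hC.const_mul (4*a)),
          integral_const_mul, integral_const_mul]
        unfold kinF
        ring

/-! ### Mass and potential invariance -/

lemma norm_modS (a : ℝ) (f : 𝓢(E3, ℂ)) (x : E3) : ‖modS a f x‖ = ‖f x‖ := by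
  rw [modS_apply, norm_mul, norm_phase, mul_one]

lemma mass_modS (a : ℝ) (f : 𝓢(E3, ℂ)) : massF (modS a f) = massF f := by
  unfold massF
  apply integral_congr_ae
  exact Filter.Eventually.of_forall fun x => by simp only [norm_modS]

lemma pot_modS (l₁ l₂ a : ℝ) (f : 𝓢(E3, ℂ)) : potF l₁ l₂ (modS a f) = potF l₁ l₂ f := by
  unfold potF
  have hF : (fun x : E3 => ((‖modS a f x‖^2 : ℝ) : ℂ)) = fun x => ((‖f x‖^2 : ℝ) : ℂ) :=
    funext fun x => by rw [norm_modS]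
  rw [hF]
  congr 1
  apply integral_congr_ae
  exact Filter.Eventually.of_forall fun x => by simp only [norm_modS]

end GaoWangAux

open GaoWangAux in
/-- The Gao–Wang virial-type inequality:
`(Im ∫ (x·∇f) conj f)² ≤ (∫ |x|²|f|²)·(H(f) − (−P(f))^{2/3}/(C^{2/3} M(f)^{1/3}))`
for nonzero Schwartz `f` with `P(f) ≤ 0`, where `C` is a Gagliardo–Nirenberg
constant. -/
theorem gao_wang_inequality (l₁ l₂ : ℝ) (C : ℝ) (hC : 0 < C)
    (hGN : ∀ g : SchwartzMap (EuclideanSpace ℝ (Fin 3)) ℂ,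
      -potF l₁ l₂ g ≤ C * kinF g ^ ((3 : ℝ) / 2) * massF g ^ ((1 : ℝ) / 2))
    (f : SchwartzMap (EuclideanSpace ℝ (Fin 3)) ℂ) (hf : f ≠ 0)
    (hP : potF l₁ l₂ f ≤ 0) :
    ((∫ x, (∑ j : Fin 3,
        (x j : ℂ) * fderiv ℝ (⇑f) x (EuclideanSpace.single j (1 : ℝ))) *
          (starRingEnd ℂ) (f x)).im) ^ 2 ≤
      (∫ x, ‖x‖ ^ 2 * ‖f x‖ ^ 2) *
        (kinF f -
          (-potF l₁ l₂ f) ^ ((2 : ℝ) / 3) /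
            (C ^ ((2 : ℝ) / 3) * massF f ^ ((1 : ℝ) / 3))) := by
  classical
  set V : ℝ := ∫ x : E3, ‖x‖^2 * ‖f x‖^2 with hV
  set Iv : ℝ := (∫ x : E3, (∑ j : Fin 3,
      ((x j : ℝ) : ℂ) * fderiv ℝ (⇑f) x (EuclideanSpace.single j (1 : ℝ))) *
        (starRingEnd ℂ) (f x)).im with hIv
  -- there is a point where `f` is nonzero
  obtain ⟨x₀, hx₀⟩ : ∃ x : E3, f x ≠ 0 := by
    by_contra h
    push_neg at h
    exact hf (SchwartzMap.ext h)
  have hUopen : IsOpen {x : E3 | f x ≠ 0} :=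
    isOpen_compl_singleton.preimage f.continuous
  -- mass positivity
  have hM : 0 < massF f := by
    rw [massF]
    rw [integral_pos_iff_support_of_nonneg (fun x => by positivity) (integrable_M f)]
    have hsub : {x : E3 | f x ≠ 0} ⊆ Function.support (fun x : E3 => ‖f x‖^2) := by
      intro x hx
      simp only [Function.mem_support]
      exact pow_ne_zero 2 (norm_ne_zero_iff.mpr hx)
    exact lt_of_lt_of_le (hUopen.measure_pos volume ⟨x₀, hx₀⟩) (measure_mono hsub)
  -- variance positivity
  have hVpos : 0 < V := by
    rw [hV]
    rw [integral_pos_iff_support_of_nonneg (fun x => by positivity) (integrable_B f)]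
    have hU'open : IsOpen ({x : E3 | f x ≠ 0} ∩ {(0:E3)}ᶜ) :=
      hUopen.inter isOpen_compl_singleton
    have hU'ne : ({x : E3 | f x ≠ 0} ∩ {(0:E3)}ᶜ).Nonempty := by
      rcases eq_or_ne x₀ 0 with h0 | h0
      · -- f 0 ≠ 0; pick a nearby nonzero point
        rw [h0] at hx₀
        obtain ⟨ε, hε, hball⟩ := Metric.isOpen_iff.mp hUopen 0 hx₀
        refine ⟨EuclideanSpace.single 0 (ε/2), ?_, ?_⟩
        · apply hball
          rw [Metric.mem_ball, dist_zero_right, EuclideanSpace.norm_single]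
          rw [Real.norm_eq_abs, abs_of_pos (by linarith)]
          linarith
        · simp only [Set.mem_compl_iff, Set.mem_singleton_iff]
          intro h
          have := congrArg (fun v : E3 => v 0) h
          simp [EuclideanSpace.single_apply] at this
          linarith
      · exact ⟨x₀, hx₀, h0⟩
    have hsub : ({x : E3 | f x ≠ 0} ∩ {(0:E3)}ᶜ) ⊆
        Function.support (fun x : E3 => ‖x‖^2 * ‖f x‖^2) := by
      rintro x ⟨hx1, hx2⟩
      have hxne : x ≠ 0 := hx2
      have h1 : ‖x‖ ≠ 0 := norm_ne_zero_iff.mpr hxne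
      simp only [Function.mem_support]
      exact mul_ne_zero (pow_ne_zero 2 h1) (pow_ne_zero 2 (norm_ne_zero_iff.mpr hx1))
    exact lt_of_lt_of_le (hU'open.measure_pos volume hU'ne) (measure_mono hsub)
  -- the W-integral and its relation to Iv
  set W : ℝ := ∫ x : E3, ∑ j : Fin 3, x j *
      ((fderiv ℝ (⇑f) x (EuclideanSpace.single j (1:ℝ))) * (starRingEnd ℂ) (f x)).im with hW
  have hIvW : Iv = W := by
    rw [hIv, hW]
    have hint : Integrable (fun x : E3 => (∑ j : Fin 3,
        ((x j : ℝ) : ℂ) * fderiv ℝ (⇑f) x (EuclideanSpace.single j (1 : ℝ))) *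
          (starRingEnd ℂ) (f x)) := by
      have := integrable_finset_sum (Finset.univ : Finset (Fin 3))
        (fun j _ => integrable_C4 f j)
      refine this.congr (Filter.Eventually.of_forall fun x => ?_)
      simp only [Finset.sum_mul]
    have him := integral_im (𝕜 := ℂ) (μ := volume) hint
    simp only [RCLike.im_to_complex] at him
    rw [← him]
    apply integral_congr_ae
    refine Filter.Eventually.of_forall fun x => ?_
    simp only [Finset.sum_mul, Complex.im_sum, mul_assoc, Complex.mul_im,
      Complex.ofReal_re, Complex.ofReal_im]
    exact Finset.sum_congr rfl fun j _ => by ring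
  -- kinetic energy is nonnegative for every Schwartz function
  have hkin_nonneg : ∀ g : 𝓢(E3, ℂ), 0 ≤ kinF g := fun g =>
    integral_nonneg fun x => Finset.sum_nonneg fun j _ => by positivity
  -- the lower bound from the GN inequality applied to the modulated function
  set P : ℝ := potF l₁ l₂ f with hPdef
  set B : ℝ := (-P) ^ ((2:ℝ)/3) / (C ^ ((2:ℝ)/3) * massF f ^ ((1:ℝ)/3)) with hB
  have hKB : ∀ a : ℝ, B ≤ kinF (modS a f) := by
    intro a
    have hgn := hGN (modS a f)
    rw [mass_modS, pot_modS] at hgn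
    set K : ℝ := kinF (modS a f) with hK
    have hKnn : 0 ≤ K := hkin_nonneg _
    have h23 : (0:ℝ) ≤ 2/3 := by norm_num
    have hle : (-P) ^ ((2:ℝ)/3) ≤ (C * K ^ ((3:ℝ)/2) * massF f ^ ((1:ℝ)/2)) ^ ((2:ℝ)/3) :=
      Real.rpow_le_rpow (by linarith) hgn h23
    have heq : (C * K ^ ((3:ℝ)/2) * massF f ^ ((1:ℝ)/2)) ^ ((2:ℝ)/3)
        = C ^ ((2:ℝ)/3) * K * massF f ^ ((1:ℝ)/3) := by
      rw [Real.mul_rpow (by positivity) (by positivity),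
        Real.mul_rpow hC.le (by positivity),
        ← Real.rpow_mul hKnn, ← Real.rpow_mul hM.le]
      norm_num
    rw [heq] at hle
    rw [hB, div_le_iff₀ (by positivity)]
    calc (-P) ^ ((2:ℝ)/3) ≤ C ^ ((2:ℝ)/3) * K * massF f ^ ((1:ℝ)/3) := hle
      _ = K * (C ^ ((2:ℝ)/3) * massF f ^ ((1:ℝ)/3)) := by ring
  -- specialize to the optimal modulation parameter
  have hkey := hKB (-Iv / (2*V))
  rw [kin_expand (-Iv / (2*V)) f, ← hV, ← hW, ← hIvW] at hkey
  have hVne : V ≠ 0 := ne_of_gt hVpos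
  have hexp : kinF f + 4*(-Iv / (2*V))^2 * V + 4*(-Iv / (2*V)) * Iv
      = kinF f - Iv^2 / V := by
    field_simp
    ring
  rw [show kinF f + 4 * (-Iv / (2 * V)) ^ 2 * V + 4 * (-Iv / (2 * V)) * Iv
      = kinF f - Iv ^ 2 / V from hexp] at hkey
  -- conclude
  have : Iv^2 / V ≤ kinF f - B := by linarith
  calc Iv ^ 2 = (Iv^2 / V) * V := by field_simp
    _ ≤ (kinF f - B) * V := by
        apply mul_le_mul_of_nonneg_right this hVpos.le
    _ = V * (kinF f - B) := by ring

end
end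

section
/- Let λ₁, λ₂ ∈ ℝ and let C > 0 be a constant such that −P(g) ≤ C · H(g)^{3/2} · M(g)^{1/2} for every Schwartz function g : ℝ³ → ℂ. Then for every δ ∈ (0,1) there exists α > 0 such that every Schwartz function f : ℝ³ → ℂ satisfying E(f)·M(f) ≤ (1−δ) · 2/(27 C²) and H(f)·M(f) ≤ 4/(9 C²) also satisfies the coercivity bound G(f)·M(f) ≥ α · H(f)·M(f). -/
open MeasureTheory FourierTransform SchwartzMap

noncomputable section

-- The energy `E(f) = (H(f) + P(f))/2`.
def enF (l₁ l₂ : ℝ) (f : SchwartzMap (EuclideanSpace ℝ (Fin 3)) ℂ) : ℝ :=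
  (kinF f + potF l₁ l₂ f) / 2

-- The Pohozaev functional `G(f) = H(f) + (3/2)P(f)`.
def pohF (l₁ l₂ : ℝ) (f : SchwartzMap (EuclideanSpace ℝ (Fin 3)) ℂ) : ℝ :=
  kinF f + (3 / 2) * potF l₁ l₂ f

lemma aux_cubic_key (δ t v : ℝ) (hδ0 : 0 < δ) (hδ1 : δ < 1) (ht0 : 0 < t)
    (ht1 : t < 1 / 2) (ht2 : t ^ 2 = δ / 4) (hv1 : v ≤ 1)
    (hvE : 3 * v ^ 2 - 2 * v ^ 3 ≤ 1 - δ) : v ≤ 1 - t := by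
  by_contra hcon
  push_neg at hcon
  nlinarith [mul_nonneg (sub_nonneg.2 hcon.le) (sub_nonneg.2 hv1),
    mul_nonneg (mul_nonneg (sub_nonneg.2 hcon.le) (sub_nonneg.2 hv1)) ht0.le,
    mul_pos ht0 hδ0, sq_nonneg (v - 1 + t)]

set_option maxHeartbeats 1000000

/-- Coercivity of the Pohozaev functional below the mass–energy threshold:
if `E(f)M(f) ≤ (1−δ)·2/(27C²)` and `H(f)M(f) ≤ 4/(9C²)` then
`G(f)M(f) ≥ α·H(f)M(f)`. -/
theorem pohozaev_coercivity_below_threshold (l₁ l₂ : ℝ) (C : ℝ) (hC : 0 < C)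
    (hGN : ∀ g : SchwartzMap (EuclideanSpace ℝ (Fin 3)) ℂ,
      -potF l₁ l₂ g ≤ C * kinF g ^ ((3 : ℝ) / 2) * massF g ^ ((1 : ℝ) / 2)) :
    ∀ δ : ℝ, 0 < δ → δ < 1 →
      ∃ α : ℝ, 0 < α ∧
        ∀ f : SchwartzMap (EuclideanSpace ℝ (Fin 3)) ℂ,
          enF l₁ l₂ f * massF f ≤ (1 - δ) * (2 / (27 * C ^ 2)) →
          kinF f * massF f ≤ 4 / (9 * C ^ 2) →
          α * (kinF f * massF f) ≤ pohF l₁ l₂ f * massF f := by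
  intro δ hδ0 hδ1
  set t : ℝ := Real.sqrt δ / 2 with ht
  have ht0 : 0 < t := by positivity
  have ht2 : t ^ 2 = δ / 4 := by
    rw [ht, div_pow, Real.sq_sqrt hδ0.le]; norm_num
  have ht1 : t < 1 / 2 := by nlinarith
  refine ⟨t, ht0, ?_⟩
  intro f hE hHM
  have hM0 : 0 ≤ massF f := integral_nonneg fun x => by positivity
  have hH0 : 0 ≤ kinF f :=
    integral_nonneg fun x => Finset.sum_nonneg fun j _ => by positivity
  set H := kinF f with hHdef
  set M := massF f with hMdef
  set P := potF l₁ l₂ f with hPdef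
  set a := Real.sqrt H with hadef
  set b := Real.sqrt M with hbdef
  have ha2 : a ^ 2 = H := Real.sq_sqrt hH0
  have hb2 : b ^ 2 = M := Real.sq_sqrt hM0
  have ha0 : 0 ≤ a := Real.sqrt_nonneg _
  have hb0 : 0 ≤ b := Real.sqrt_nonneg _
  have hrH : H ^ ((3 : ℝ) / 2) = a ^ 3 := by
    rw [show ((3 : ℝ) / 2) = (1 / 2) * 3 by norm_num, Real.rpow_mul hH0,
      ← Real.sqrt_eq_rpow]
    exact_mod_cast Real.rpow_natCast a 3
  have hrM : M ^ ((1 : ℝ) / 2) = b := (Real.sqrt_eq_rpow M).symm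
  have hP : -P ≤ C * a ^ 3 * b := by
    have := hGN f
    rwa [← hHdef, ← hMdef, ← hPdef, hrH, hrM] at this
  have hPM : -(P * M) ≤ C * a ^ 3 * b ^ 3 := by
    have h := mul_le_mul_of_nonneg_right hP hM0
    calc -(P * M) = -P * M := by ring
      _ ≤ C * a ^ 3 * b * M := h
      _ = C * a ^ 3 * b ^ 3 := by rw [← hb2]; ring
  have hsle : a * b ≤ 2 / (3 * C) := by
    have h1 : (a * b) ^ 2 ≤ (2 / (3 * C)) ^ 2 := by
      have : (a * b) ^ 2 = H * M := by rw [mul_pow, ha2, hb2]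
      rw [this, div_pow]
      calc H * M ≤ 4 / (9 * C ^ 2) := hHM
        _ = 2 ^ 2 / (3 * C) ^ 2 := by ring
    have hr0 : (0 : ℝ) < 2 / (3 * C) := by positivity
    nlinarith [mul_nonneg ha0 hb0]
  set v : ℝ := 3 * C * (a * b) / 2 with hvdef
  have hv0 : 0 ≤ v := by positivity
  have hv1 : v ≤ 1 := by
    rw [hvdef]
    rw [div_le_one (by norm_num : (0:ℝ) < 2)]
    calc 3 * C * (a * b) ≤ 3 * C * (2 / (3 * C)) :=
          mul_le_mul_of_nonneg_left hsle (by positivity)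
      _ = 2 := by field_simp
  have hsv : a * b = 2 * v / (3 * C) := by rw [hvdef]; field_simp
  have hE' : ((a * b) ^ 2 - C * (a * b) ^ 3) / 2 ≤ (1 - δ) * (2 / (27 * C ^ 2)) := by
    have hEM : enF l₁ l₂ f * M = (H * M + P * M) / 2 := by
      rw [enF, ← hHdef, ← hPdef]; ring
    have hHM2 : (a * b) ^ 2 = H * M := by rw [mul_pow, ha2, hb2]
    rw [hEM] at hE
    have h1 : (a * b) ^ 2 - C * (a * b) ^ 3 ≤ H * M + P * M := by
      have h2 : C * (a * b) ^ 3 = C * (a ^ 3 * b ^ 3) := by ring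
      rw [hHM2, h2]; linarith [hPM]
    linarith
  have hvE : 3 * v ^ 2 - 2 * v ^ 3 ≤ 1 - δ := by
    have hid : ((a * b) ^ 2 - C * (a * b) ^ 3) / 2
        = (3 * v ^ 2 - 2 * v ^ 3) * (2 / (27 * C ^ 2)) := by
      rw [hsv]; field_simp; ring
    rw [hid] at hE'
    have hk : (0 : ℝ) < 2 / (27 * C ^ 2) := by positivity
    exact le_of_mul_le_mul_right (by linarith [hE']) hk
  have hvt : v ≤ 1 - t := aux_cubic_key δ t v hδ0 hδ1 ht0 ht1 ht2 hv1 hvE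
  -- conclude
  have hG : pohF l₁ l₂ f * M = H * M + 3 / 2 * (P * M) := by
    rw [pohF, ← hHdef, ← hPdef]; ring
  have hHM2 : H * M = (a * b) ^ 2 := by rw [mul_pow, ha2, hb2]
  rw [hG, hHM2]
  have hcube : C * (a * b) ^ 3 = (2 / 3) * v * (a * b) ^ 2 := by
    rw [hvdef]; field_simp
  have h3 : v * (a * b) ^ 2 ≤ (1 - t) * (a * b) ^ 2 :=
    mul_le_mul_of_nonneg_right hvt (sq_nonneg _)
  have h5 : 3 / 2 * (C * (a * b) ^ 3) = v * (a * b) ^ 2 := by rw [hcube]; ring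
  have h6 : -(P * M) ≤ C * (a * b) ^ 3 := by
    calc -(P * M) ≤ C * a ^ 3 * b ^ 3 := hPM
      _ = C * (a * b) ^ 3 := by ring
  linarith

end
end
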